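/- Let R₀ = [a₁,b₁]×[a₂,b₂] with a₁ < b₁ and a₂ < b₂, and let F ⊆ R₀ be a rectilinear polygon. Then P₁(F)/L²(F) ≥ P₁(R₀)/L²(R₀) = 2·((b₁−a₁)+(b₂−a₂))/((b₁−a₁)·(b₂−a₂)); that is, among rectilinear polygons contained in R₀, the ratio of ℓ¹-perimeter to area is minimized by R₀ itself. -/

import Mathlib

open MeasureTheory Filter Set
open scoped MeasureTheory ENNReal RealInnerProductSpace

noncomputable section

/-- The Euclidean plane ℝ². -/
abbrev E2 := EuclideanSpace ℝ (Fin 2)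

/-- Divergence of a vector field on ℝ². -/
def divg (η : E2 → E2) (x : E2) : ℝ :=
  fderiv ℝ η x (EuclideanSpace.single 0 1) 0 + fderiv ℝ η x (EuclideanSpace.single 1 1) 1

/-- The ℓ¹-anisotropic total variation of `u` on an (open) set `U`:
the supremum of `∫_U u · div η` over C¹ vector fields `η` compactly supported in `U`
with `max |η₁| |η₂| ≤ 1` everywhere. -/
def TV1 (U : Set E2) (u : E2 → ℝ) : ℝ≥0∞ :=
  ⨆ η : {η : E2 → E2 // ContDiff ℝ 1 η ∧ HasCompactSupport η ∧ tsupport η ⊆ U ∧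
      ∀ x, max |η x 0| |η x 1| ≤ 1},
    ENNReal.ofReal (∫ x in U, u x * divg η.1 x)

/-- Relative ℓ¹-anisotropic perimeter `P₁(E;U)`. -/
def P1 (E U : Set E2) : ℝ≥0∞ := TV1 U (Set.indicator E fun _ => 1)

/-- ℓ¹-anisotropic perimeter `P₁(E) = P₁(E;ℝ²)`. -/
def P1' (E : Set E2) : ℝ≥0∞ := P1 E Set.univ

/-- 1-dimensional Hausdorff measure on the plane. -/
def μH1 : Measure E2 := μH[1]

/-- The set `∂^{1/2} E` of points of density 1/2 of `E`. -/
def halfBoundary (E : Set E2) : Set E2 :=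
  {x | Tendsto (fun ρ : ℝ => volume (Metric.ball x ρ ∩ E) / volume (Metric.ball x ρ))
    (nhdsWithin 0 (Set.Ioi 0)) (nhds (1 / 2))}

/-- A grid: a finite family of vertical lines (abscissae `X`) and horizontal lines
(ordinates `Y`), with at least two lines in each direction. -/
structure Grid where
  X : Finset ℝ
  Y : Finset ℝ
  hX : 2 ≤ X.card
  hY : 2 ≤ Y.card

/-- `a` and `b` are consecutive elements of the finite set `S`. -/
def Consec (S : Finset ℝ) (a b : ℝ) : Prop :=
  a ∈ S ∧ b ∈ S ∧ a < b ∧ ∀ c ∈ S, ¬(a < c ∧ c < b)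

/-- The closed axis-parallel rectangle `[a,b] × [c,d]`. -/
def cellSet (a b c d : ℝ) : Set E2 := {x : E2 | x 0 ∈ Icc a b ∧ x 1 ∈ Icc c d}

/-- A cell of the grid `G`. -/
def Grid.IsCell (G : Grid) (R : Set E2) : Prop :=
  ∃ a b c d, Consec G.X a b ∧ Consec G.Y c d ∧ R = cellSet a b c d

/-- An edge of the grid `G`: a closed segment joining two adjacent grid vertices. -/
def Grid.IsEdge (G : Grid) (I : Set E2) : Prop :=
  (∃ a b y, Consec G.X a b ∧ y ∈ G.Y ∧ I = {x : E2 | x 0 ∈ Icc a b ∧ x 1 = y}) ∨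
  (∃ c d z, Consec G.Y c d ∧ z ∈ G.X ∧ I = {x : E2 | x 0 = z ∧ x 1 ∈ Icc c d})

/-- The union of the lines of the grid `G`. -/
def Grid.lines (G : Grid) : Set E2 := {x : E2 | (x 0 ∈ G.X) ∨ (x 1 ∈ G.Y)}

/-- A closed axis-parallel rectangle with nonempty interior. -/
def IsClosedRect (R : Set E2) : Prop :=
  ∃ a b c d : ℝ, a < b ∧ c < d ∧ R = cellSet a b c d

/-- A rectilinear polygon: a finite nonempty union of closed axis-parallel rectangles
with nonempty interior. -/
def IsRectPolygon (F : Set E2) : Prop :=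
  ∃ 𝒮 : Finset (Set E2), 𝒮.Nonempty ∧ (∀ R ∈ 𝒮, IsClosedRect R) ∧ F = ⋃ R ∈ 𝒮, R

/-- `F ∈ F(G)`: `F` is a (nonempty) union of cells of the grid `G`. -/
def SubordinateTo (G : Grid) (F : Set E2) : Prop :=
  ∃ 𝒮 : Finset (Set E2), 𝒮.Nonempty ∧ (∀ R ∈ 𝒮, G.IsCell R) ∧ F = ⋃ R ∈ 𝒮, R

/-- A signature `(Fp, Fm)` for (the boundary of) the set `F`. -/
def IsSignature (F Fp Fm : Set E2) : Prop :=
  Fp ⊆ frontier F ∧ Fm ⊆ frontier F ∧ μH1 (Fp ∩ Fm) = 0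

/-- A signature subordinate to the grid `G`: both parts are unions of two disjoint
families of edges of `G`. -/
def SigSubordinate (G : Grid) (Fp Fm : Set E2) : Prop :=
  ∃ Ip Im : Finset (Set E2), (∀ I ∈ Ip, G.IsEdge I) ∧ (∀ I ∈ Im, G.IsEdge I) ∧
    Disjoint Ip Im ∧ Fp = ⋃ I ∈ Ip, I ∧ Fm = ⋃ I ∈ Im, I

/-- `f` is a.e. constant on the set `S`. -/
def AEConstOn (f : E2 → ℝ) (S : Set E2) : Prop :=
  ∃ c : ℝ, ∀ᵐ x ∂(volume.restrict S), f x = c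

/-- The Cheeger-type functional `J_{F₀, ∂F₀⁺, ∂F₀⁻, f}`, with values in `EReal`. -/
def cheegerJ (F₀ Fp Fm : Set E2) (f : E2 → ℝ) (E : Set E2) : EReal :=
  if P1' E < ⊤ then
    ((((volume E).toReal⁻¹ * ((P1 E (interior F₀)).toReal
      + (μH1 (halfBoundary E ∩ Fp)).toReal - (μH1 (halfBoundary E ∩ Fm)).toReal
      - ∫ x in E, f x)) : ℝ) : EReal)
  else (⊤ : EReal)

/-- The Cheeger-type functional `J̌_{F₀, ∂F₀⁺, ∂F₀⁻, f}`, with values in `EReal`. -/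
def cheegerJcheck (F₀ Fp Fm : Set E2) (f : E2 → ℝ) (E : Set E2) : EReal :=
  if P1' E < ⊤ then
    ((((volume E).toReal⁻¹ * (-(P1 E (interior F₀)).toReal
      + (μH1 (halfBoundary E ∩ Fp)).toReal - (μH1 (halfBoundary E ∩ Fm)).toReal
      - ∫ x in E, f x)) : ℝ) : EReal)
  else (⊥ : EReal)

/-- `Q` is a partition of `Ω` into rectilinear polygons. -/
def IsPartitionOf (Ω : Set E2) (Q : Finset (Set E2)) : Prop :=
  (∀ F ∈ Q, IsRectPolygon F) ∧
  ((Q : Set (Set E2)).Pairwise fun F F' => Disjoint (interior F) (interior F')) ∧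
  (⋃ F ∈ Q, F) = Ω

/-- `Q` is a partition of `Ω` into rectilinear polygons on the interior of each of
which `u` is a.e. constant. -/
def PCRwitness (Ω : Set E2) (u : E2 → ℝ) (Q : Finset (Set E2)) : Prop :=
  IsPartitionOf Ω Q ∧ ∀ F ∈ Q, AEConstOn u (interior F)

/-- `u ∈ PCR(Ω)`: `u` is piecewise constant on a partition of `Ω` into rectilinear
polygons. -/
def PCROn (Ω : Set E2) (u : E2 → ℝ) : Prop := ∃ Q, PCRwitness Ω u Q

/-- `Q = Q(u)`: a coarsest (minimum cardinality) partition witnessing `u ∈ PCR(Ω)`. -/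
def IsCanonicalPartition (Ω : Set E2) (u : E2 → ℝ) (Q : Finset (Set E2)) : Prop :=
  PCRwitness Ω u Q ∧ ∀ Q' : Finset (Set E2), PCRwitness Ω u Q' → Q.card ≤ Q'.card

/-- `G = G(u)`: a smallest grid such that `Ω` and all members of a canonical partition
`Q(u)` are subordinate to `G`. -/
def IsCanonicalGrid (Ω : Set E2) (u : E2 → ℝ) (G : Grid) : Prop :=
  (SubordinateTo G Ω ∧ ∃ Q, IsCanonicalPartition Ω u Q ∧ ∀ F ∈ Q, SubordinateTo G F) ∧
  ∀ G' : Grid,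
    (SubordinateTo G' Ω ∧ ∃ Q, IsCanonicalPartition Ω u Q ∧ ∀ F ∈ Q, SubordinateTo G' F) →
    G.X ⊆ G'.X ∧ G.Y ⊆ G'.Y

/-- A consistent signature for the family `Q`, given by the two assignments
`Sp` (positive parts) and `Sm` (negative parts). -/
def IsConsistentSignature (Q : Finset (Set E2)) (Sp Sm : Set E2 → Set E2) : Prop :=
  (∀ F ∈ Q, IsSignature F (Sp F) (Sm F)) ∧
  ∀ F ∈ Q, ∀ F' ∈ Q, F ≠ F' →
    (∀ x ∈ Sp F, x ∈ F' → x ∈ Sm F') ∧ (∀ x ∈ Sm F, x ∈ F' → x ∈ Sp F')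

/-- `v ∈ -∂TV₁(u; U)`: the negative subdifferential of `TV₁(·;U)` on `L²(U)`. -/
def InNegSubdiffTV1 (U : Set E2) (u v : E2 → ℝ) : Prop :=
  MemLp u 2 (volume.restrict U) ∧ MemLp v 2 (volume.restrict U) ∧ TV1 U u < ⊤ ∧
  ∀ w : E2 → ℝ, MemLp w 2 (volume.restrict U) →
    ENNReal.ofReal ((TV1 U u).toReal - ∫ x in U, v x * (w x - u x)) ≤ TV1 U w

/-- The time interval `[0, T)` (with `T ∈ (0,∞]`) as a subset of `ℝ`. -/
def Ivl (T : ℝ≥0∞) : Set ℝ := {t : ℝ | 0 ≤ t ∧ (ENNReal.ofReal t) < T}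

/-- `u` (with pointwise derivative family `u'`) is a strong solution of the
ℓ¹-total variation flow on `U` on `[0,T)` with initial datum `u₀`:
`u : [0,T) → L²(U)` is continuous, `u(0) = u₀`, it is locally absolutely continuous
in time on `(0,T)` with derivative `u'`, and `u'(t) ∈ -∂TV₁(u(t);U)` for a.e. `t`. -/
def IsStrongSolutionTV1 (U : Set E2) (T : ℝ≥0∞) (u₀ : E2 → ℝ) (u u' : ℝ → E2 → ℝ) : Prop :=
  (∀ᵐ x ∂(volume.restrict U), u 0 x = u₀ x) ∧
  (∀ t ∈ Ivl T, MemLp (u t) 2 (volume.restrict U)) ∧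
  (∀ t ∈ Ivl T, Tendsto (fun s => eLpNorm (u s - u t) 2 (volume.restrict U))
      (nhdsWithin t (Ivl T)) (nhds 0)) ∧
  (∀ s ∈ Ivl T, ∀ t ∈ Ivl T, 0 < s → 0 < t →
      ∀ᵐ x ∂(volume.restrict U), u t x - u s x = ∫ r in s..t, u' r x) ∧
  (∀ᵐ t ∂(volume.restrict (Ivl T)), 0 < t → InNegSubdiffTV1 U (u t) (u' t))

/-- The ℓ¹-ROF functional `E_λ(u) = TV₁(u; int Ω) + (1/(2λ)) ∫_Ω (u-u₀)²`. -/
def ROF (lam : ℝ) (Ω : Set E2) (u₀ u : E2 → ℝ) : ℝ≥0∞ :=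
  TV1 (interior Ω) u +
    ENNReal.ofReal (2 * lam)⁻¹ * ∫⁻ x in Ω, ENNReal.ofReal ((u x - u₀ x) ^ 2)

/-- `u` minimizes the ℓ¹-ROF functional over `L²(Ω)`. -/
def MinimizesROF (lam : ℝ) (Ω : Set E2) (u₀ u : E2 → ℝ) : Prop :=
  MemLp u 2 (volume.restrict Ω) ∧
  ∀ v : E2 → ℝ, MemLp v 2 (volume.restrict Ω) → ROF lam Ω u₀ u ≤ ROF lam Ω u₀ v

/-- Two cells of `G` lying between the same two consecutive horizontal lines,
separated by at most `m` cells of `G`. -/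
def RowPair (G : Grid) (m : ℕ) (R₁ R₂ : Set E2) : Prop :=
  ∃ c d a₁ b₁ a₂ b₂, Consec G.Y c d ∧ Consec G.X a₁ b₁ ∧ Consec G.X a₂ b₂ ∧
    R₁ = cellSet a₁ b₁ c d ∧ R₂ = cellSet a₂ b₂ c d ∧
    (G.X.filter fun x => min b₁ b₂ ≤ x ∧ x ≤ max a₁ a₂).card ≤ m + 1

/-- Two cells of `G` lying between the same two consecutive vertical lines,
separated by at most `m` cells of `G`. -/
def ColPair (G : Grid) (m : ℕ) (R₁ R₂ : Set E2) : Prop :=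
  ∃ a b c₁ d₁ c₂ d₂, Consec G.X a b ∧ Consec G.Y c₁ d₁ ∧ Consec G.Y c₂ d₂ ∧
    R₁ = cellSet a b c₁ d₁ ∧ R₂ = cellSet a b c₂ d₂ ∧
    (G.Y.filter fun y => min d₁ d₂ ≤ y ∧ y ≤ max c₁ c₂).card ≤ m + 1

/-- The pair relation `R²_{i,m}(G)`: `i = true` for rows, `i = false` for columns. -/
def CellPair (G : Grid) (i : Bool) (m : ℕ) (R₁ R₂ : Set E2) : Prop :=
  if i then RowPair G m R₁ R₂ else ColPair G m R₁ R₂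

/-- A possibly-unbounded rectilinear polygon: either a rectilinear polygon or the
closure of the complement of a finite union of closed axis-parallel rectangles. -/
def IsGenRectPolygon (F : Set E2) : Prop :=
  IsRectPolygon F ∨
  ∃ 𝒮 : Finset (Set E2), (∀ R ∈ 𝒮, IsClosedRect R) ∧ F = closure ((⋃ R ∈ 𝒮, R)ᶜ)

/-- A possibly-unbounded rectilinear polygon is subordinate to `G` if its topological
boundary is contained in the union of the lines of `G`. -/
def GenSubordinate (G : Grid) (F : Set E2) : Prop := frontier F ⊆ G.lines

/-- A finite family of possibly-unbounded rectilinear polygons with pairwise disjoint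
interiors and union `ℝ²`, exactly one member being unbounded. -/
def IsGenPartition (Q : Finset (Set E2)) : Prop :=
  (∀ F ∈ Q, IsGenRectPolygon F) ∧
  ((Q : Set (Set E2)).Pairwise fun F F' => Disjoint (interior F) (interior F')) ∧
  (⋃ F ∈ Q, F) = Set.univ ∧
  (∃! F : Set E2, F ∈ Q ∧ ¬Bornology.IsBounded F)

/-- A witness that `u ∈ PCR₊(ℝ²)`: `u` is a.e. non-negative with essentially compact
support, a.e. constant on the interior of each member of `Q`. -/
def PCRplusWitness (u : E2 → ℝ) (Q : Finset (Set E2)) : Prop :=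
  (∀ᵐ x : E2 ∂volume, 0 ≤ u x) ∧
  (∃ K : Set E2, IsCompact K ∧ ∀ᵐ x : E2 ∂volume, x ∉ K → u x = 0) ∧
  IsGenPartition Q ∧ ∀ F ∈ Q, AEConstOn u (interior F)

/-- `u ∈ PCR₊(ℝ²)`. -/
def PCRplus (u : E2 → ℝ) : Prop := ∃ Q, PCRplusWitness u Q

/-- `Q = Q(u)` for `u ∈ PCR₊(ℝ²)`: a coarsest (minimum cardinality) witness. -/
def IsCanonicalGenPartition (u : E2 → ℝ) (Q : Finset (Set E2)) : Prop :=
  PCRplusWitness u Q ∧ ∀ Q' : Finset (Set E2), PCRplusWitness u Q' → Q.card ≤ Q'.card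

/-- `G = G(u)` for `u ∈ PCR₊(ℝ²)`. -/
def IsCanonicalGenGrid (u : E2 → ℝ) (G : Grid) : Prop :=
  (∃ Q, IsCanonicalGenPartition u Q ∧ ∀ F ∈ Q, GenSubordinate G F) ∧
  ∀ G' : Grid, (∃ Q, IsCanonicalGenPartition u Q ∧ ∀ F ∈ Q, GenSubordinate G' F) →
    G.X ⊆ G'.X ∧ G.Y ⊆ G'.Y

end

noncomputable section Stmt15Aux

def Tm : (ℝ × ℝ) ≃ᵐ E2 :=
  (MeasurableEquiv.finTwoArrow (α := ℝ)).symm.trans (MeasurableEquiv.toLp 2 (Fin 2 → ℝ))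
def Tl : (ℝ × ℝ) →L[ℝ] E2 :=
  ((EuclideanSpace.equiv (Fin 2) ℝ).symm.toContinuousLinearMap).comp
    (ContinuousLinearEquiv.finTwoArrow ℝ ℝ).symm.toContinuousLinearMap
lemma Tm_mp : MeasurePreserving Tm volume volume :=
  ((EuclideanSpace.volume_preserving_symm_measurableEquiv_toLp (Fin 2)).symm).comp
    ((MeasureTheory.volume_preserving_finTwoArrow ℝ).symm)

lemma Tm_preimage_cell (a b c d : ℝ) :
    ⇑Tm ⁻¹' (cellSet a b c d) = Icc (a,c) (b,d) := by
  ext p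
  show (p.1 ∈ Icc a b ∧ p.2 ∈ Icc c d) ↔ _
  rw [Icc_prod_eq]
  exact Iff.rfl

lemma cell_measurable (a b c d : ℝ) : MeasurableSet (cellSet a b c d) := by
  have : cellSet a b c d = Tm '' (Icc (a,c) (b,d)) := by
    rw [← Tm_preimage_cell a b c d, Set.image_preimage_eq _ Tm.surjective]
  rw [this]
  exact (Tm.measurableEmbedding.measurableSet_image).2 measurableSet_Icc

lemma cell_compact (a b c d : ℝ) : IsCompact (cellSet a b c d) := by
  have : cellSet a b c d = ⇑Tm '' (Icc (a,c) (b,d)) := by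
    rw [← Tm_preimage_cell a b c d, Set.image_preimage_eq _ Tm.surjective]
  rw [this]
  exact isCompact_Icc.image (by exact Tl.continuous)

lemma cell_volume (a b c d : ℝ) :
    volume (cellSet a b c d) = ENNReal.ofReal (b - a) * ENNReal.ofReal (d - c) := by
  rw [← Tm_mp.measure_preimage (cell_measurable a b c d).nullMeasurableSet,
    Tm_preimage_cell, Icc_prod_eq]
  rw [show ((a,c) : ℝ×ℝ).1 = a from rfl]
  rw [Measure.volume_eq_prod, Measure.prod_prod, Real.volume_Icc, Real.volume_Icc]

lemma setIntegral_cell (g : E2 → ℝ) (a b c d : ℝ) :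
    ∫ x in cellSet a b c d, g x = ∫ p in Icc (a,c) (b,d), g (Tm p) := by
  rw [← Tm_preimage_cell a b c d]
  exact (Tm_mp.setIntegral_preimage_emb Tm.measurableEmbedding g _).symm

lemma Tl_e0 : Tl (1, 0) = EuclideanSpace.single 0 1 := by
  ext i
  fin_cases i <;> simp [Tl]

lemma Tl_e1 : Tl (0, 1) = EuclideanSpace.single 1 1 := by
  ext i
  fin_cases i <;> simp [Tl]

lemma divg_cont {η : E2 → E2} (hη : ContDiff ℝ 1 η) : Continuous (divg η) := by
  have h := hη.continuous_fderiv one_ne_zero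
  have h0 : Continuous fun x => fderiv ℝ η x (EuclideanSpace.single 0 1) :=
    h.clm_apply continuous_const
  have h1 : Continuous fun x => fderiv ℝ η x (EuclideanSpace.single 1 1) :=
    h.clm_apply continuous_const
  exact ((by fun_prop : Continuous fun y : E2 => y 0).comp h0).add ((by fun_prop : Continuous fun y : E2 => y 1).comp h1)

lemma cell_bound {η : E2 → E2} (hη : ContDiff ℝ 1 η)
    (hb : ∀ x, max |η x 0| |η x 1| ≤ 1)
    {a b c d : ℝ} (hab : a ≤ b) (hcd : c ≤ d) :
    |∫ x in cellSet a b c d, divg η x| ≤ 2 * (b - a) + 2 * (d - c) := by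
  have hdiff : Differentiable ℝ η := hη.differentiable one_ne_zero
  set f : ℝ × ℝ → ℝ := fun p => η (Tm p) 0 with hf
  set g : ℝ × ℝ → ℝ := fun p => η (Tm p) 1 with hg
  set f' : ℝ × ℝ → (ℝ × ℝ) →L[ℝ] ℝ := fun p =>
    ((EuclideanSpace.proj (0 : Fin 2)).comp (fderiv ℝ η (Tm p))).comp Tl with hf'
  set g' : ℝ × ℝ → (ℝ × ℝ) →L[ℝ] ℝ := fun p =>
    ((EuclideanSpace.proj (1 : Fin 2)).comp (fderiv ℝ η (Tm p))).comp Tl with hg'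
  have hdiv_eq : (fun p : ℝ × ℝ => f' p (1, 0) + g' p (0, 1)) = fun p => divg η (Tm p) := by
    funext p
    simp only [hf', hg', ContinuousLinearMap.comp_apply, Tl_e0, Tl_e1, divg]
    rfl
  have hcont : Continuous fun p : ℝ × ℝ => f' p (1, 0) + g' p (0, 1) := by
    rw [hdiv_eq]
    exact (divg_cont hη).comp (by exact Tl.continuous)
  have hTη : ∀ p : ℝ × ℝ, HasFDerivAt (fun q => η (Tm q)) ((fderiv ℝ η (Tm p)).comp Tl) p := by
    intro p
    exact ((hdiff (Tm p)).hasFDerivAt).comp p Tl.hasFDerivAt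
  have hdf : ∀ p : ℝ × ℝ, HasFDerivAt f (f' p) p := fun p => by
    exact (EuclideanSpace.proj (0 : Fin 2)).hasFDerivAt.comp p (hTη p)
  have hdg : ∀ p : ℝ × ℝ, HasFDerivAt g (g' p) p := fun p => by
    exact (EuclideanSpace.proj (1 : Fin 2)).hasFDerivAt.comp p (hTη p)
  have hTmc : Continuous (⇑Tm) := by exact Tl.continuous
  have hfc : Continuous f := by
    exact (by fun_prop : Continuous fun y : E2 => y 0).comp (hη.continuous.comp hTmc)
  have hgc : Continuous g := by
    exact (by fun_prop : Continuous fun y : E2 => y 1).comp (hη.continuous.comp hTmc)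
  have hle : ((a, c) : ℝ × ℝ) ≤ (b, d) := by exact ⟨hab, hcd⟩
  have key := integral_divergence_prod_Icc_of_hasFDerivAt_off_countable_of_le
    f g f' g' (a, c) (b, d) hle ∅ countable_empty
    hfc.continuousOn hgc.continuousOn
    (fun x _ => hdf x) (fun x _ => hdg x)
    (hcont.continuousOn.integrableOn_compact isCompact_Icc)
  have e1 : ∫ x in cellSet a b c d, divg η x
      = ∫ p in Icc ((a,c) : ℝ × ℝ) (b,d), f' p (1, 0) + g' p (0, 1) := by
    rw [setIntegral_cell, hdiv_eq]
  have hI : ∀ (l r : ℝ) (F : ℝ → ℝ), (∀ x, |F x| ≤ 1) → |∫ x in l..r, F x| ≤ |r - l| := by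
    intro l r F hF
    have := intervalIntegral.norm_integral_le_of_norm_le_const (a := l) (b := r) (f := F)
      (C := 1) (fun x _ => by simpa using hF x)
    simpa using this
  have hb0 : ∀ x : E2, |η x 0| ≤ 1 := fun x => le_trans (le_max_left _ _) (hb x)
  have hb1 : ∀ x : E2, |η x 1| ≤ 1 := fun x => le_trans (le_max_right _ _) (hb x)
  have h1 := hI a b (fun x => g (x, d)) (fun x => hb1 _)
  have h2 := hI a b (fun x => g (x, c)) (fun x => hb1 _)
  have h3 := hI c d (fun y => f (b, y)) (fun y => hb0 _)
  have h4 := hI c d (fun y => f (a, y)) (fun y => hb0 _)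
  have hba : |b - a| = b - a := abs_of_nonneg (by linarith)
  have hdc : |d - c| = d - c := abs_of_nonneg (by linarith)
  rw [hba] at h1 h2
  rw [hdc] at h3 h4
  obtain ⟨h1a, h1b⟩ := abs_le.mp h1
  obtain ⟨h2a, h2b⟩ := abs_le.mp h2
  obtain ⟨h3a, h3b⟩ := abs_le.mp h3
  obtain ⟨h4a, h4b⟩ := abs_le.mp h4
  rw [e1, key]
  show |(((∫ x in a..b, g (x, d)) - ∫ x in a..b, g (x, c)) + ∫ y in c..d, f (b, y))
      - ∫ y in c..d, f (a, y)| ≤ _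
  rw [abs_le]
  constructor <;> [skip; skip] <;> linarith

set_option maxHeartbeats 1000000 in
lemma exists_eta (u v w z p q : ℝ) (huv : u < v) (hwz : w < z)
    (hp : 0 < p) (hq : 0 < q) (hpv : p * ((v - u) / 2) < 1) (hqv : q * ((z - w) / 2) < 1) :
    ∃ η : E2 → E2, ContDiff ℝ 1 η ∧ HasCompactSupport η ∧
      (∀ x, max |η x 0| |η x 1| ≤ 1) ∧
      ∀ x ∈ cellSet u v w z, divg η x = p + q := by
  set m₁ : ℝ := (u + v) / 2 with hm₁
  set r₁ : ℝ := (v - u) / 2 with hr₁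
  set m₂ : ℝ := (w + z) / 2 with hm₂
  set r₂ : ℝ := (z - w) / 2 with hr₂
  have hr₁pos : 0 < r₁ := by rw [hr₁]; linarith
  have hr₂pos : 0 < r₂ := by rw [hr₂]; linarith
  have h1p : r₁ < 1 / p := by rw [lt_div_iff₀ hp]; linarith [mul_comm p r₁]
  have h1q : r₂ < 1 / q := by rw [lt_div_iff₀ hq]; linarith [mul_comm q r₂]
  set ψ₁ : ContDiffBump m₁ := ⟨(r₁ + 1/p)/2, 1/p, by positivity, by linarith⟩ with hψ₁
  set ψ₂ : ContDiffBump m₂ := ⟨(r₂ + 1/q)/2, 1/q, by positivity, by linarith⟩ with hψ₂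
  set χ₁ : ContDiffBump m₁ := ⟨r₁ + 1, r₁ + 2, by linarith, by linarith⟩ with hχ₁
  set χ₂ : ContDiffBump m₂ := ⟨r₂ + 1, r₂ + 2, by linarith, by linarith⟩ with hχ₂
  set f : ℝ → ℝ := fun t => p * (t - m₁) * ψ₁ t with hf
  set g : ℝ → ℝ := fun t => q * (t - m₂) * ψ₂ t with hg
  set E0 : E2 := EuclideanSpace.single (0 : Fin 2) (1 : ℝ) with hE0
  set E1 : E2 := EuclideanSpace.single (1 : Fin 2) (1 : ℝ) with hE1
  set η : E2 → E2 := fun x => (f (x 0) * χ₂ (x 1)) • E0 + (g (x 1) * χ₁ (x 0)) • E1 with hη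
  have hcoord0 : ∀ x : E2, η x 0 = f (x 0) * χ₂ (x 1) := by
    intro x
    simp [hη, hE0, hE1, EuclideanSpace.single_apply]
  have hcoord1 : ∀ x : E2, η x 1 = g (x 1) * χ₁ (x 0) := by
    intro x
    simp [hη, hE0, hE1, EuclideanSpace.single_apply]
  -- auxiliary: |f t| ≤ 1
  have habs : ∀ (m : ℝ) (s : ℝ) (hs : 0 < s) (hsr : (0:ℝ) < 1/s) (ψ : ContDiffBump m)
      (hout : ψ.rOut = 1/s) (t : ℝ), |s * (t - m) * ψ t| ≤ 1 := by
    intro m s hs hsr ψ hout t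
    by_cases h : 1/s ≤ dist t m
    · rw [ψ.zero_of_le_dist (hout ▸ h)]
      simp
    · push_neg at h
      rw [Real.dist_eq] at h
      have h0 : 0 ≤ ψ t := ψ.nonneg
      have h1 : ψ t ≤ 1 := ψ.le_one
      rw [abs_mul, abs_mul, abs_of_pos hs, abs_of_nonneg h0]
      have : |t - m| * ψ t ≤ 1/s := by
        calc |t - m| * ψ t ≤ |t - m| * 1 := by
              exact mul_le_mul_of_nonneg_left h1 (abs_nonneg _)
        _ = |t - m| := mul_one _
        _ ≤ 1/s := le_of_lt h
      calc s * |t - m| * ψ t = s * (|t - m| * ψ t) := by ring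
      _ ≤ s * (1/s) := mul_le_mul_of_nonneg_left this (le_of_lt hs)
      _ = 1 := by field_simp
  have hfb : ∀ t, |f t| ≤ 1 := fun t => habs m₁ p hp (by positivity) ψ₁ rfl t
  have hgb : ∀ t, |g t| ≤ 1 := fun t => habs m₂ q hq (by positivity) ψ₂ rfl t
  have hχb : ∀ (m : ℝ) (χ : ContDiffBump m) (t : ℝ), |χ t| ≤ 1 := by
    intro m χ t
    rw [abs_of_nonneg χ.nonneg]; exact χ.le_one
  refine ⟨η, ?_, ?_, ?_, ?_⟩
  · -- ContDiff
    have c0 : ContDiff ℝ 1 fun x : E2 => x 0 := contDiff_piLp_apply 2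
    have c1 : ContDiff ℝ 1 fun x : E2 => x 1 := contDiff_piLp_apply 2
    have hfs : ContDiff ℝ 1 f := by
      exact ((contDiff_const.mul (contDiff_id.sub contDiff_const)).mul
        (ψ₁.contDiff (n := 1)))
    have hgs : ContDiff ℝ 1 g := by
      exact ((contDiff_const.mul (contDiff_id.sub contDiff_const)).mul
        (ψ₂.contDiff (n := 1)))
    have hχ₁s : ContDiff ℝ 1 (⇑χ₁) := χ₁.contDiff (n := 1)
    have hχ₂s : ContDiff ℝ 1 (⇑χ₂) := χ₂.contDiff (n := 1)
    exact (((hfs.comp c0).mul (hχ₂s.comp c1)).smul contDiff_const).add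
      (((hgs.comp c1).mul (hχ₁s.comp c0)).smul contDiff_const)
  · -- compact support
    set M₁ : ℝ := max (1/p) (r₁ + 2) with hM₁
    set M₂ : ℝ := max (1/q) (r₂ + 2) with hM₂
    refine HasCompactSupport.intro (cell_compact (m₁ - M₁) (m₁ + M₁) (m₂ - M₂) (m₂ + M₂)) ?_
    intro x hx
    have hzero : (f (x 0) * χ₂ (x 1) = 0 ∧ g (x 1) * χ₁ (x 0) = 0) := by
      simp only [cellSet, mem_setOf_eq, mem_Icc, not_and_or, not_and, not_le] at hx
      have hM₁0 : 0 < M₁ := lt_of_lt_of_le (by positivity) (le_max_left (1/p) (r₁+2))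
      have hM₂0 : 0 < M₂ := lt_of_lt_of_le (by positivity) (le_max_left (1/q) (r₂+2))
      have key : (M₁ < |x 0 - m₁|) ∨ (M₂ < |x 1 - m₂|) := by
        rcases hx with h | h
        · left
          rcases h with h | h
          · rw [abs_of_nonpos (by linarith)]; linarith
          · rw [abs_of_pos (by linarith)]; linarith
        · right
          rcases h with h | h
          · rw [abs_of_nonpos (by linarith)]; linarith
          · rw [abs_of_pos (by linarith)]; linarith
      rcases key with h | h
      · have hd : (1:ℝ)/p ≤ dist (x 0) m₁ := by
          rw [Real.dist_eq]
          exact le_trans (le_max_left _ _) (le_of_lt h)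
        have hd' : r₁ + 2 ≤ dist (x 0) m₁ := by
          rw [Real.dist_eq]
          exact le_trans (le_max_right _ _) (le_of_lt h)
        constructor
        · rw [hf]; simp [ψ₁.zero_of_le_dist hd]
        · rw [χ₁.zero_of_le_dist hd', mul_zero]
      · have hd : (1:ℝ)/q ≤ dist (x 1) m₂ := by
          rw [Real.dist_eq]
          exact le_trans (le_max_left _ _) (le_of_lt h)
        have hd' : r₂ + 2 ≤ dist (x 1) m₂ := by
          rw [Real.dist_eq]
          exact le_trans (le_max_right _ _) (le_of_lt h)
        constructor
        · rw [χ₂.zero_of_le_dist hd', mul_zero]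
        · rw [hg]; simp [ψ₂.zero_of_le_dist hd]
    rw [hη]
    simp only [hzero.1, hzero.2, zero_smul, add_zero]
  · -- bound
    intro x
    rw [hcoord0, hcoord1]
    rw [max_le_iff]
    constructor
    · rw [abs_mul]
      calc |f (x 0)| * |χ₂ (x 1)| ≤ 1 * 1 :=
        mul_le_mul (hfb _) (hχb _ _ _) (abs_nonneg _) zero_le_one
      _ = 1 := one_mul _
    · rw [abs_mul]
      calc |g (x 1)| * |χ₁ (x 0)| ≤ 1 * 1 :=
        mul_le_mul (hgb _) (hχb _ _ _) (abs_nonneg _) zero_le_one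
      _ = 1 := one_mul _
  · -- divergence on the cell
    intro x hx
    set c0 : E2 →L[ℝ] ℝ := EuclideanSpace.proj (0 : Fin 2) with hc0
    set c1 : E2 →L[ℝ] ℝ := EuclideanSpace.proj (1 : Fin 2) with hc1
    set L : E2 →L[ℝ] E2 := ((p • c0).smulRight E0) + ((q • c1).smulRight E1) with hL
    set ηaff : E2 → E2 := fun y => (p * (y 0 - m₁)) • E0 + (q * (y 1 - m₂)) • E1 with hηa
    have hρ₁ : ∀ y : E2, dist (y 0) m₁ < min ψ₁.rIn χ₁.rIn → η y = ηaff y → True := fun _ _ _ => trivial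
    -- the open set where all bumps are 1
    set ρ₁ : ℝ := min ψ₁.rIn χ₁.rIn with hρ₁def
    set ρ₂ : ℝ := min ψ₂.rIn χ₂.rIn with hρ₂def
    set V : Set E2 := {y : E2 | dist (y 0) m₁ < ρ₁ ∧ dist (y 1) m₂ < ρ₂} with hV
    have hVopen : IsOpen V := by
      have hcont0 : Continuous fun y : E2 => dist (y 0) m₁ :=
        (by fun_prop : Continuous fun y : E2 => y 0).dist continuous_const
      have hcont1 : Continuous fun y : E2 => dist (y 1) m₂ :=
        (by fun_prop : Continuous fun y : E2 => y 1).dist continuous_const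
      exact (isOpen_lt hcont0 continuous_const).inter (isOpen_lt hcont1 continuous_const)
    have hr₁ρ : r₁ < ρ₁ := by
      rw [hρ₁def]
      apply lt_min
      · show r₁ < (r₁ + 1/p)/2; linarith
      · show r₁ < r₁ + 1; linarith
    have hr₂ρ : r₂ < ρ₂ := by
      rw [hρ₂def]
      apply lt_min
      · show r₂ < (r₂ + 1/q)/2; linarith
      · show r₂ < r₂ + 1; linarith
    have hxV : x ∈ V := by
      obtain ⟨hx0, hx1⟩ := hx
      obtain ⟨ha', hb'⟩ := hx0
      obtain ⟨hc', hd'⟩ := hx1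
      constructor
      · rw [Real.dist_eq]
        have : |x 0 - m₁| ≤ r₁ := by
          rw [abs_le, hm₁, hr₁]
          constructor <;> linarith
        linarith
      · rw [Real.dist_eq]
        have : |x 1 - m₂| ≤ r₂ := by
          rw [abs_le, hm₂, hr₂]
          constructor <;> linarith
        linarith
    have hagree : ∀ y ∈ V, η y = ηaff y := by
      intro y hy
      obtain ⟨hy0, hy1⟩ := hy
      have hψ₁1 : ψ₁ (y 0) = 1 := ψ₁.one_of_mem_closedBall
        (by rw [Metric.mem_closedBall]; exact le_of_lt (lt_of_lt_of_le hy0 (min_le_left _ _)))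
      have hχ₁1 : χ₁ (y 0) = 1 := χ₁.one_of_mem_closedBall
        (by rw [Metric.mem_closedBall]; exact le_of_lt (lt_of_lt_of_le hy0 (min_le_right _ _)))
      have hψ₂1 : ψ₂ (y 1) = 1 := ψ₂.one_of_mem_closedBall
        (by rw [Metric.mem_closedBall]; exact le_of_lt (lt_of_lt_of_le hy1 (min_le_left _ _)))
      have hχ₂1 : χ₂ (y 1) = 1 := χ₂.one_of_mem_closedBall
        (by rw [Metric.mem_closedBall]; exact le_of_lt (lt_of_lt_of_le hy1 (min_le_right _ _)))
      rw [hη, hηa]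
      simp only [hf, hg, hψ₁1, hχ₁1, hψ₂1, hχ₂1, mul_one]
    have hev : η =ᶠ[nhds x] ηaff :=
      Filter.eventuallyEq_of_mem (hVopen.mem_nhds hxV) hagree
    have haff : HasFDerivAt ηaff L x := by
      have h0 : HasFDerivAt (fun y : E2 => (p * (y 0 - m₁)) • E0) ((p • c0).smulRight E0) x := by
        have : HasFDerivAt (fun y : E2 => p * (y 0 - m₁)) (p • c0) x := by
          have hbase : HasFDerivAt (fun y : E2 => y 0 - m₁) c0 x := c0.hasFDerivAt.sub_const m₁
          exact hbase.const_mul p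
        exact this.smul_const E0
      have h1 : HasFDerivAt (fun y : E2 => (q * (y 1 - m₂)) • E1) ((q • c1).smulRight E1) x := by
        have : HasFDerivAt (fun y : E2 => q * (y 1 - m₂)) (q • c1) x := by
          have hbase : HasFDerivAt (fun y : E2 => y 1 - m₂) c1 x := c1.hasFDerivAt.sub_const m₂
          exact hbase.const_mul q
        exact this.smul_const E1
      exact h0.add h1
    have hfd : fderiv ℝ η x = L := by
      rw [hev.fderiv_eq]
      exact haff.fderiv
    rw [divg, hfd]
    simp only [hL, ContinuousLinearMap.add_apply, ContinuousLinearMap.smulRight_apply,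
      ContinuousLinearMap.smul_apply, PiLp.proj_apply, PiLp.add_apply, PiLp.smul_apply,
      smul_eq_mul, hE0, hE1]
    simp [hc0, hc1, EuclideanSpace.single_apply]

lemma divg_integrable {η : E2 → E2} (hη : ContDiff ℝ 1 η) (hs : HasCompactSupport η) :
    Integrable (divg η) := by
  have hcs : HasCompactSupport (divg η) := by
    have h := hs.fderiv (𝕜 := ℝ)
    exact h.comp_left
      (g := fun L : E2 →L[ℝ] E2 => L (EuclideanSpace.single 0 1) 0 + L (EuclideanSpace.single 1 1) 1)
      (by simp)
  exact (divg_cont hη).integrable_of_hasCompactSupport hcs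

lemma cell_inter (a b c d a' b' c' d' : ℝ) :
    cellSet a b c d ∩ cellSet a' b' c' d'
      = cellSet (max a a') (min b b') (max c c') (min d d') := by
  ext x
  show ((x 0 ∈ Icc a b ∧ x 1 ∈ Icc c d) ∧ (x 0 ∈ Icc a' b' ∧ x 1 ∈ Icc c' d')) ↔ _
  show _ ↔ (x 0 ∈ Icc (max a a') (min b b') ∧ x 1 ∈ Icc (max c c') (min d d'))
  rw [← Set.Icc_inter_Icc, ← Set.Icc_inter_Icc, Set.mem_inter_iff, Set.mem_inter_iff]
  tauto

lemma grect_bound {η : E2 → E2} (hη : ContDiff ℝ 1 η)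
    (hb : ∀ x, max |η x 0| |η x 1| ≤ 1)
    {a₁ b₁ a₂ b₂ : ℝ} (h₁ : a₁ < b₁) (h₂ : a₂ < b₂)
    {R : Set E2} (hR : ∃ a b c d, R = cellSet a b c d)
    (hsub : R ⊆ cellSet a₁ b₁ a₂ b₂) :
    |∫ x in R, divg η x| ≤ 2 * (b₁ - a₁) + 2 * (b₂ - a₂) := by
  obtain ⟨a, b, c, d, rfl⟩ := hR
  by_cases hab : a ≤ b
  · by_cases hcd : c ≤ d
    · have hm1 : Tm (a, c) ∈ cellSet a b c d := by
        exact ⟨⟨le_rfl, hab⟩, le_rfl, hcd⟩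
      have hm2 : Tm (b, d) ∈ cellSet a b c d := by
        exact ⟨⟨hab, le_rfl⟩, hcd, le_rfl⟩
      have h1 := hsub hm1
      have h2 := hsub hm2
      have e1 : Tm ((a, c) : ℝ × ℝ) 0 = a := rfl
      have e2 : Tm ((a, c) : ℝ × ℝ) 1 = c := rfl
      have e3 : Tm ((b, d) : ℝ × ℝ) 0 = b := rfl
      have e4 : Tm ((b, d) : ℝ × ℝ) 1 = d := rfl
      obtain ⟨⟨ha1, _⟩, ⟨hc1, _⟩⟩ := h1
      obtain ⟨⟨_, hb1⟩, ⟨_, hd1⟩⟩ := h2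
      rw [e1] at ha1; rw [e2] at hc1; rw [e3] at hb1; rw [e4] at hd1
      calc |∫ x in cellSet a b c d, divg η x| ≤ 2 * (b - a) + 2 * (d - c) :=
            cell_bound hη hb hab hcd
      _ ≤ 2 * (b₁ - a₁) + 2 * (b₂ - a₂) := by linarith
    · have : cellSet a b c d = ∅ := by
        ext x
        simp only [cellSet, mem_setOf_eq, mem_Icc, mem_empty_iff_false, iff_false]
        intro h
        exact hcd (le_trans h.2.1 h.2.2)
      rw [this]
      simp only [Measure.restrict_empty, integral_zero_measure, abs_zero]
      linarith
  · have : cellSet a b c d = ∅ := by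
      ext x
      simp only [cellSet, mem_setOf_eq, mem_Icc, mem_empty_iff_false, iff_false]
      intro h
      exact hab (le_trans h.1.1 h.1.2)
    rw [this]
    simp only [Measure.restrict_empty, integral_zero_measure, abs_zero]
    linarith

lemma integral_union_ie {g : E2 → ℝ} (hg : Integrable g) {A C : Set E2}
    (hA : MeasurableSet A) (hC : MeasurableSet C) :
    ∫ x in A ∪ C, g x = (∫ x in A, g x) + (∫ x in C, g x) - ∫ x in A ∩ C, g x := by
  have hd1 : Disjoint A (C \ A) := disjoint_sdiff_right.mono_left le_rfl
  have e1 : A ∪ C = A ∪ (C \ A) := by rw [Set.union_diff_self]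
  have e2 : C = (C ∩ A) ∪ (C \ A) := (Set.inter_union_diff C A).symm
  have hd2 : Disjoint (C ∩ A) (C \ A) := by
    exact Disjoint.mono_left (Set.inter_subset_right) disjoint_sdiff_right
  have i1 : ∫ x in A ∪ C, g x = (∫ x in A, g x) + ∫ x in C \ A, g x := by
    rw [e1]
    exact setIntegral_union hd1 (hC.diff hA) hg.integrableOn hg.integrableOn
  have i2 : ∫ x in C, g x = (∫ x in C ∩ A, g x) + ∫ x in C \ A, g x := by
    conv_lhs => rw [e2]
    exact setIntegral_union hd2 (hC.diff hA) hg.integrableOn hg.integrableOn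
  rw [Set.inter_comm A C]
  linarith

lemma one_le_three_pow (n : ℕ) : (1:ℝ) ≤ 3 ^ n := by
  induction n with
  | zero => norm_num
  | succ k ihk => rw [pow_succ]; nlinarith

lemma union_bound {η : E2 → E2} (hη : ContDiff ℝ 1 η) (hs : HasCompactSupport η)
    (hb : ∀ x, max |η x 0| |η x 1| ≤ 1)
    {a₁ b₁ a₂ b₂ : ℝ} (h₁ : a₁ < b₁) (h₂ : a₂ < b₂) :
    ∀ (n : ℕ) (𝒮 : Finset (Set E2)), 𝒮.card ≤ n →
      (∀ R ∈ 𝒮, (∃ a b c d, R = cellSet a b c d) ∧ R ⊆ cellSet a₁ b₁ a₂ b₂) →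
      |∫ x in (⋃ R ∈ 𝒮, R), divg η x| ≤ (3 : ℝ) ^ n * (2 * (b₁ - a₁) + 2 * (b₂ - a₂)) := by
  have hB : (0:ℝ) ≤ 2 * (b₁ - a₁) + 2 * (b₂ - a₂) := by linarith
  classical
  intro n
  induction n with
  | zero =>
    intro 𝒮 hcard _
    have : 𝒮 = ∅ := Finset.card_eq_zero.mp (Nat.le_zero.mp hcard)
    subst this
    simp only [Finset.notMem_empty, Set.iUnion_of_empty, Set.iUnion_empty,
      Measure.restrict_empty, integral_zero_measure, abs_zero, pow_zero, one_mul]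
    exact hB
  | succ n ih =>
    intro 𝒮 hcard hall
    rcases Finset.eq_empty_or_nonempty 𝒮 with rfl | ⟨R, hR⟩
    · simp only [Finset.notMem_empty, Set.iUnion_of_empty, Set.iUnion_empty,
        Measure.restrict_empty, integral_zero_measure, abs_zero]
      positivity
    · set 𝒮' := 𝒮.erase R with h𝒮'
      have h𝒮 : 𝒮 = insert R 𝒮' := (Finset.insert_erase hR).symm
      have hcard' : 𝒮'.card ≤ n := by
        have h1 : 𝒮'.card = 𝒮.card - 1 := by rw [h𝒮']; exact Finset.card_erase_of_mem hR
        have h2 : 0 < 𝒮.card := Finset.card_pos.mpr ⟨R, hR⟩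
        omega
      have hmeas : ∀ S ∈ 𝒮, MeasurableSet S := by
        intro S hS
        obtain ⟨⟨a, b, c, d, rfl⟩, _⟩ := hall S hS
        exact cell_measurable a b c d
      have hU'meas : MeasurableSet (⋃ S ∈ 𝒮', S) := by
        apply Set.Finite.measurableSet_biUnion 𝒮'.finite_toSet
        intro S hS
        exact hmeas S (Finset.mem_of_mem_erase hS)
      have hRmeas : MeasurableSet R := hmeas R hR
      have hUeq : (⋃ S ∈ 𝒮, S) = R ∪ ⋃ S ∈ 𝒮', S := by
        conv_lhs => rw [h𝒮]
        simp [Finset.set_biUnion_insert]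
      have hint := divg_integrable hη hs
      have hIE := integral_union_ie hint hRmeas hU'meas
      -- the intersection as a union over an image finset
      set 𝒯 : Finset (Set E2) := 𝒮'.image (fun S => R ∩ S) with h𝒯
      have hTcard : 𝒯.card ≤ n := le_trans (Finset.card_image_le) hcard'
      have hTeq : R ∩ ⋃ S ∈ 𝒮', S = ⋃ S ∈ 𝒯, S := by
        rw [h𝒯]
        rw [Set.inter_iUnion₂]
        ext x
        simp only [Set.mem_iUnion, Finset.mem_image, exists_prop]
        constructor
        · rintro ⟨S, hS, hx⟩
          exact ⟨R ∩ S, ⟨S, hS, rfl⟩, hx⟩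
        · rintro ⟨T, ⟨S, hS, rfl⟩, hx⟩
          exact ⟨S, hS, hx⟩
      have hTall : ∀ T ∈ 𝒯, (∃ a b c d, T = cellSet a b c d) ∧ T ⊆ cellSet a₁ b₁ a₂ b₂ := by
        intro T hT
        rw [h𝒯] at hT
        obtain ⟨S, hS, rfl⟩ := Finset.mem_image.mp hT
        obtain ⟨⟨a, b, c, d, hScell⟩, hSsub⟩ := hall S (Finset.mem_of_mem_erase hS)
        obtain ⟨⟨a', b', c', d', hRcell⟩, hRsub⟩ := hall R hR
        refine ⟨⟨max a' a, min b' b, max c' c, min d' d, ?_⟩, ?_⟩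
        · rw [hScell, hRcell, cell_inter]
        · exact Subset.trans Set.inter_subset_left hRsub
      have b1 : |∫ x in R, divg η x| ≤ 2 * (b₁ - a₁) + 2 * (b₂ - a₂) :=
        grect_bound hη hb h₁ h₂ (hall R hR).1 (hall R hR).2
      have b2 := ih 𝒮' hcard' (fun S hS => hall S (Finset.mem_of_mem_erase hS))
      have b3' := ih 𝒯 hTcard hTall
      have b3 : |∫ x in R ∩ ⋃ S ∈ 𝒮', S, divg η x|
          ≤ (3:ℝ) ^ n * (2 * (b₁ - a₁) + 2 * (b₂ - a₂)) := by
        rw [hTeq]; exact b3'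
      rw [hUeq, hIE]
      have h3n : (1:ℝ) ≤ 3 ^ n := one_le_three_pow n
      have habs : |(∫ x in R, divg η x) + (∫ x in ⋃ S ∈ 𝒮', S, divg η x)
          - ∫ x in R ∩ ⋃ S ∈ 𝒮', S, divg η x|
          ≤ |∫ x in R, divg η x| + |∫ x in ⋃ S ∈ 𝒮', S, divg η x|
            + |∫ x in R ∩ ⋃ S ∈ 𝒮', S, divg η x| := by
        exact (abs_sub _ _).trans (by gcongr; exact abs_add_le _ _)
      have : (3:ℝ) ^ (n+1) = 3 ^ n + 3 ^ n + 3 ^ n := by ring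
      rw [this]
      nlinarith [abs_nonneg (∫ x in R, divg η x)]

lemma P1'_integrand (E : Set E2) (hE : MeasurableSet E) (η : E2 → E2) :
    ∫ x in Set.univ, (Set.indicator E fun _ => (1:ℝ)) x * divg η x = ∫ x in E, divg η x := by
  rw [setIntegral_univ, ← integral_indicator hE]
  congr 1
  funext x
  by_cases hx : x ∈ E <;> simp [Set.indicator_of_mem, Set.indicator_of_notMem, hx]

lemma P1'_le_of_bound (E : Set E2) (hE : MeasurableSet E) (M : ℝ)
    (h : ∀ η : E2 → E2, ContDiff ℝ 1 η → HasCompactSupport η →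
      (∀ x, max |η x 0| |η x 1| ≤ 1) → |∫ x in E, divg η x| ≤ M) :
    P1' E ≤ ENNReal.ofReal M := by
  rw [P1', P1, TV1]
  apply iSup_le
  rintro ⟨η, hc, hcs, _, hb⟩
  apply ENNReal.ofReal_le_ofReal
  rw [P1'_integrand E hE η]
  exact le_trans (le_abs_self _) (h η hc hcs hb)

lemma le_P1' (E : Set E2) (hE : MeasurableSet E) (η : E2 → E2)
    (hc : ContDiff ℝ 1 η) (hcs : HasCompactSupport η)
    (hb : ∀ x, max |η x 0| |η x 1| ≤ 1) :
    ENNReal.ofReal (∫ x in E, divg η x) ≤ P1' E := by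
  rw [P1', P1, TV1]
  refine le_iSup_of_le ⟨η, hc, hcs, Set.subset_univ _, hb⟩ ?_
  rw [P1'_integrand E hE η]

/-- Lower bound on `P1'` for measurable subsets of the rectangle. -/
lemma P1'_lower {a₁ b₁ a₂ b₂ : ℝ} (h₁ : a₁ < b₁) (h₂ : a₂ < b₂)
    (E : Set E2) (hE : MeasurableSet E) (hEsub : E ⊆ cellSet a₁ b₁ a₂ b₂)
    (s : ℝ) (hs0 : 0 < s) (hs1 : s < 1) :
    ENNReal.ofReal ((s * (2 / (b₁ - a₁)) + s * (2 / (b₂ - a₂))) * (volume E).toReal)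
      ≤ P1' E := by
  set p := s * (2 / (b₁ - a₁)) with hp
  set q := s * (2 / (b₂ - a₂)) with hq
  have hw : 0 < b₁ - a₁ := by linarith
  have hh : 0 < b₂ - a₂ := by linarith
  have hppos : 0 < p := by rw [hp]; positivity
  have hqpos : 0 < q := by rw [hq]; positivity
  have hpv : p * ((b₁ - a₁) / 2) < 1 := by
    rw [hp]
    have : s * (2 / (b₁ - a₁)) * ((b₁ - a₁) / 2) = s := by field_simp
    rw [this]; exact hs1
  have hqv : q * ((b₂ - a₂) / 2) < 1 := by
    rw [hq]
    have : s * (2 / (b₂ - a₂)) * ((b₂ - a₂) / 2) = s := by field_simp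
    rw [this]; exact hs1
  obtain ⟨η, hc, hcs, hb, hdiv⟩ := exists_eta a₁ b₁ a₂ b₂ p q h₁ h₂ hppos hqpos hpv hqv
  have hint : ∫ x in E, divg η x = (p + q) * (volume E).toReal := by
    rw [setIntegral_congr_fun hE (fun x hx => hdiv x (hEsub hx))]
    rw [setIntegral_const, smul_eq_mul, mul_comm]
    rfl
  calc ENNReal.ofReal ((p + q) * (volume E).toReal) = ENNReal.ofReal (∫ x in E, divg η x) := by
        rw [hint]
  _ ≤ P1' E := le_P1' E hE η hc hcs hb

end Stmt15Aux

/-- The rectangle minimizes the ratio of ℓ¹-perimeter to area among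
rectilinear polygons contained in it. For the rectangle `R₀ = [a₁,b₁] × [a₂,b₂]`,
`P₁(R₀)/L²(R₀) = 2((b₁−a₁)+(b₂−a₂))/((b₁−a₁)(b₂−a₂))`, and every rectilinear
polygon `F ⊆ R₀` satisfies `P₁(F)/L²(F) ≥ P₁(R₀)/L²(R₀)`. -/
theorem stmt15 (a₁ b₁ a₂ b₂ : ℝ) (h₁ : a₁ < b₁) (h₂ : a₂ < b₂)
    (F : Set E2) (hF : IsRectPolygon F) (hFsub : F ⊆ cellSet a₁ b₁ a₂ b₂) :
    (P1' (cellSet a₁ b₁ a₂ b₂)).toReal / (volume (cellSet a₁ b₁ a₂ b₂)).toReal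
      = 2 * ((b₁ - a₁) + (b₂ - a₂)) / ((b₁ - a₁) * (b₂ - a₂)) ∧
    (P1' (cellSet a₁ b₁ a₂ b₂)).toReal / (volume (cellSet a₁ b₁ a₂ b₂)).toReal
      ≤ (P1' F).toReal / (volume F).toReal := by
  have hw : 0 < b₁ - a₁ := by linarith
  have hh : 0 < b₂ - a₂ := by linarith
  set R₀ := cellSet a₁ b₁ a₂ b₂ with hR₀
  set c : ℝ := 2 * ((b₁ - a₁) + (b₂ - a₂)) with hc
  have hcpos : 0 < c := by rw [hc]; linarith
  -- volume of R₀
  have hvolR₀ : (volume R₀).toReal = (b₁ - a₁) * (b₂ - a₂) := by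
    rw [hR₀, cell_volume, ENNReal.toReal_mul, ENNReal.toReal_ofReal hw.le,
      ENNReal.toReal_ofReal hh.le]
  -- upper bound for P1' R₀
  have hup : P1' R₀ ≤ ENNReal.ofReal c := by
    apply P1'_le_of_bound _ (cell_measurable _ _ _ _)
    intro η hη hcs hb
    have := grect_bound hη hb h₁ h₂ ⟨a₁, b₁, a₂, b₂, rfl⟩ (subset_refl _)
    rw [hc]
    linarith
  have hne : P1' R₀ ≠ ⊤ := ne_top_of_le_ne_top ENNReal.ofReal_ne_top hup
  -- lower bound via the limit argument
  have hlow : ∀ s : ℝ, 0 < s → s < 1 → s * c ≤ (P1' R₀).toReal := by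
    intro s hs0 hs1
    have h := P1'_lower h₁ h₂ R₀ (cell_measurable _ _ _ _) (subset_refl _) s hs0 hs1
    have heq : (s * (2 / (b₁ - a₁)) + s * (2 / (b₂ - a₂))) * (volume R₀).toReal = s * c := by
      rw [hvolR₀, hc]
      field_simp
      ring
    rw [heq] at h
    calc s * c = (ENNReal.ofReal (s * c)).toReal :=
          (ENNReal.toReal_ofReal (by positivity)).symm
    _ ≤ (P1' R₀).toReal := ENNReal.toReal_mono hne h
  have hA : (P1' R₀).toReal = c := by
    apply le_antisymm
    · calc (P1' R₀).toReal ≤ (ENNReal.ofReal c).toReal :=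
          ENNReal.toReal_mono (ENNReal.ofReal_ne_top) hup
      _ = c := ENNReal.toReal_ofReal hcpos.le
    · by_contra hcon
      push_neg at hcon
      set A := (P1' R₀).toReal with hAdef
      have hA0 : 0 ≤ A := ENNReal.toReal_nonneg
      have hs0 : 0 < (A + c) / (2 * c) := by positivity
      have hs1 : (A + c) / (2 * c) < 1 := by
        rw [div_lt_one (by positivity)]
        linarith
      have := hlow _ hs0 hs1
      have heq : (A + c) / (2 * c) * c = (A + c) / 2 := by field_simp
      rw [heq] at this
      linarith
  constructor
  · rw [hA, hvolR₀, hc]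
  · -- part 2
    obtain ⟨𝒮, h𝒮ne, h𝒮rect, hFeq⟩ := hF
    have hall : ∀ R ∈ 𝒮, (∃ a b c d, R = cellSet a b c d) ∧ R ⊆ R₀ := by
      intro R hR
      obtain ⟨a, b, c', d, _, _, hRcell⟩ := h𝒮rect R hR
      refine ⟨⟨a, b, c', d, hRcell⟩, ?_⟩
      intro x hx
      apply hFsub
      rw [hFeq]
      exact Set.mem_biUnion hR hx
    have hFmeas : MeasurableSet F := by
      rw [hFeq]
      apply Set.Finite.measurableSet_biUnion 𝒮.finite_toSet
      intro R hR
      obtain ⟨⟨a, b, c', d, hRcell⟩, _⟩ := hall R hR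
      rw [hRcell]; exact cell_measurable _ _ _ _
    -- volume of F is positive and finite
    have hvolFpos : 0 < (volume F).toReal := by
      obtain ⟨R, hR⟩ := h𝒮ne
      obtain ⟨a, b, c', d, hab, hcd, hRcell⟩ := h𝒮rect R hR
      have hsub : R ⊆ F := by
        intro x hx
        rw [hFeq]; exact Set.mem_biUnion hR hx
      have h1 : volume R ≤ volume F := measure_mono hsub
      have h2 : volume F ≤ volume R₀ := measure_mono hFsub
      have hFfin : volume F < ⊤ := lt_of_le_of_lt h2 (by
        rw [hR₀, cell_volume]
        exact ENNReal.mul_lt_top ENNReal.ofReal_lt_top ENNReal.ofReal_lt_top)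
      apply ENNReal.toReal_pos _ hFfin.ne
      intro h0
      rw [h0] at h1
      have : volume R = 0 := le_antisymm (le_of_le_of_eq h1 rfl) zero_le
      rw [hRcell, cell_volume] at this
      have hb1 : ENNReal.ofReal (b - a) ≠ 0 := by
        simp only [ne_eq, ENNReal.ofReal_eq_zero, not_le]
        linarith
      have hb2 : ENNReal.ofReal (d - c') ≠ 0 := by
        simp only [ne_eq, ENNReal.ofReal_eq_zero, not_le]
        linarith
      exact (mul_ne_zero hb1 hb2) this
    have hvolFfin : volume F ≠ ⊤ := by
      have h2 : volume F ≤ volume R₀ := measure_mono hFsub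
      intro htop
      rw [htop] at h2
      rw [hR₀, cell_volume] at h2
      exact (ENNReal.mul_lt_top ENNReal.ofReal_lt_top ENNReal.ofReal_lt_top).ne
        (top_le_iff.mp h2)
    -- P1' F is finite
    have hPFup : P1' F ≤ ENNReal.ofReal ((3:ℝ) ^ 𝒮.card * c) := by
      apply P1'_le_of_bound _ hFmeas
      intro η hη hcs hb
      have := union_bound hη hcs hb h₁ h₂ 𝒮.card 𝒮 le_rfl hall
      rw [← hFeq] at this
      rw [hc]
      calc |∫ x in F, divg η x| ≤ (3:ℝ) ^ 𝒮.card * (2 * (b₁ - a₁) + 2 * (b₂ - a₂)) := this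
      _ = (3:ℝ) ^ 𝒮.card * (2 * ((b₁ - a₁) + (b₂ - a₂))) := by ring
    have hPFne : P1' F ≠ ⊤ := ne_top_of_le_ne_top ENNReal.ofReal_ne_top hPFup
    -- lower bound for P1' F
    set AF := (volume F).toReal with hAF
    set cF : ℝ := (2 / (b₁ - a₁) + 2 / (b₂ - a₂)) * AF with hcF
    have hcFpos : 0 < cF := by
      rw [hcF]
      apply mul_pos _ hvolFpos
      positivity
    have hlowF : ∀ s : ℝ, 0 < s → s < 1 → s * cF ≤ (P1' F).toReal := by
      intro s hs0 hs1
      have h := P1'_lower h₁ h₂ F hFmeas hFsub s hs0 hs1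
      have heq : (s * (2 / (b₁ - a₁)) + s * (2 / (b₂ - a₂))) * (volume F).toReal = s * cF := by
        rw [hcF, hAF]; ring
      rw [heq] at h
      calc s * cF = (ENNReal.ofReal (s * cF)).toReal :=
            (ENNReal.toReal_ofReal (by positivity)).symm
      _ ≤ (P1' F).toReal := ENNReal.toReal_mono hPFne h
    have hPFlow : cF ≤ (P1' F).toReal := by
      by_contra hcon
      push_neg at hcon
      set PF := (P1' F).toReal with hPFdef
      have hPF0 : 0 ≤ PF := ENNReal.toReal_nonneg
      have hs0 : 0 < (PF + cF) / (2 * cF) := by positivity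
      have hs1 : (PF + cF) / (2 * cF) < 1 := by
        rw [div_lt_one (by positivity)]
        linarith
      have := hlowF _ hs0 hs1
      have heq : (PF + cF) / (2 * cF) * cF = (PF + cF) / 2 := by field_simp
      rw [heq] at this
      linarith
    -- conclude
    rw [hA, hvolR₀]
    rw [div_le_div_iff₀ (by positivity) hvolFpos]
    have hfac : (2 / (b₁ - a₁) + 2 / (b₂ - a₂)) * ((b₁ - a₁) * (b₂ - a₂)) = c := by
      rw [hc]; field_simp; ring
    calc c * (volume F).toReal
        = ((2 / (b₁ - a₁) + 2 / (b₂ - a₂)) * (volume F).toReal) * ((b₁ - a₁) * (b₂ - a₂)) := by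
          rw [← hfac]; ring
    _ ≤ (P1' F).toReal * ((b₁ - a₁) * (b₂ - a₂)) := by
        apply mul_le_mul_of_nonneg_right _ (by positivity)
        exact hPFlow
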